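/- arXiv:1310.6813 — 2 statements merged into one kernel-verified Lean document; each statement's English description precedes it below -/
import Mathlib

section
/- Let C, D ∈ Clifford(n) be such that C P C⁻¹ = D P D⁻¹ for every P ∈ Pauli(n). Then C and D differ only by a global phase that is a power of ω, i.e., C = ωᶦ·D for some integer i with 0 ≤ i < 8, where ω = e^{iπ/4}. -/
open scoped Matrix Kronecker

noncomputable section

def PX : Matrix (Fin 2) (Fin 2) ℂ := !![0, 1; 1, 0]
def PY : Matrix (Fin 2) (Fin 2) ℂ := !![0, -Complex.I; Complex.I, 0]
def PZ : Matrix (Fin 2) (Fin 2) ℂ := !![1, 0; 0, -1]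
def gH : Matrix (Fin 2) (Fin 2) ℂ := (Real.sqrt 2 : ℂ)⁻¹ • !![1, 1; 1, -1]
def gS : Matrix (Fin 2) (Fin 2) ℂ := !![1, 0; 0, Complex.I]
def gCZ : Matrix (Fin 4) (Fin 4) ℂ :=
  !![1,0,0,0; 0,1,0,0; 0,0,1,0; 0,0,0,-1]
def ω : ℂ := Complex.exp (Complex.I * Real.pi / 4)

/-- Kronecker product of square matrices, with index types flattened to `Fin (m * k)`. -/
def kron' {m k : ℕ} (A : Matrix (Fin m) (Fin m) ℂ) (B : Matrix (Fin k) (Fin k) ℂ) :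
    Matrix (Fin (m * k)) (Fin (m * k)) ℂ :=
  Matrix.reindex finProdFinEquiv finProdFinEquiv (A ⊗ₖ B)

/-- `n`-fold tensor product `P 0 ⊗ P 1 ⊗ ⋯ ⊗ P (n-1)` of 2×2 matrices. -/
def tensorPow : (n : ℕ) → (Fin n → Matrix (Fin 2) (Fin 2) ℂ) →
    Matrix (Fin (2 ^ n)) (Fin (2 ^ n)) ℂ
  | 0, _ => 1
  | n + 1, P =>
      Matrix.reindex (finCongr (pow_succ' 2 n).symm) (finCongr (pow_succ' 2 n).symm)
        (kron' (P 0) (tensorPow n fun i => P i.succ))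

/-- The set of n-qubit Pauli operators: λ • P₁ ⊗ ⋯ ⊗ Pₙ with λ ∈ {1,-1,i,-i},
    Pⱼ ∈ {I, X, Y, Z}. -/
def PauliSet (n : ℕ) : Set (Matrix (Fin (2 ^ n)) (Fin (2 ^ n)) ℂ) :=
  {M | ∃ (lam : ℂ) (P : Fin n → Matrix (Fin 2) (Fin 2) ℂ),
    lam ∈ ({1, -1, Complex.I, -Complex.I} : Set ℂ) ∧
    (∀ i, P i ∈ ({1, PX, PY, PZ} : Set (Matrix (Fin 2) (Fin 2) ℂ))) ∧
    M = lam • tensorPow n P}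

/-- `I_{2^a} ⊗ G ⊗ I_{2^b}`, where `G` acts on `c` qubits and `a + c + b = n`. -/
def embed (a c b n : ℕ) (h : a + c + b = n)
    (G : Matrix (Fin (2 ^ c)) (Fin (2 ^ c)) ℂ) :
    Matrix (Fin (2 ^ n)) (Fin (2 ^ n)) ℂ :=
  Matrix.reindex (finCongr (by subst h; rw [pow_add, pow_add, mul_assoc]))
    (finCongr (by subst h; rw [pow_add, pow_add, mul_assoc]))
    (kron' (1 : Matrix (Fin (2 ^ a)) (Fin (2 ^ a)) ℂ)
      (kron' G (1 : Matrix (Fin (2 ^ b)) (Fin (2 ^ b)) ℂ)))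

/-- Generators of the Clifford group: ω•I, and H, S, CZ applied to (adjacent) qubits. -/
def CliffordGenSet (n : ℕ) : Set (Matrix (Fin (2 ^ n)) (Fin (2 ^ n)) ℂ) :=
  {ω • 1} ∪
  {M | ∃ a b, ∃ h : a + 1 + b = n, M = embed a 1 b n h gH ∨ M = embed a 1 b n h gS} ∪
  {M | ∃ a b, ∃ h : a + 2 + b = n, M = embed a 2 b n h gCZ}

/-- The Clifford group on n qubits, as a subgroup of `GL (2^n) ℂ`. -/
def CliffordGroup (n : ℕ) : Subgroup (GL (Fin (2 ^ n)) ℂ) :=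
  Subgroup.closure
    {u : GL (Fin (2 ^ n)) ℂ | (u : Matrix (Fin (2 ^ n)) (Fin (2 ^ n)) ℂ) ∈ CliffordGenSet n}

/-- The Pauli group on n qubits, as a subgroup of `GL (2^n) ℂ`.
    (Its underlying set of matrices is exactly `PauliSet n`.) -/
def PauliGroup (n : ℕ) : Subgroup (GL (Fin (2 ^ n)) ℂ) :=
  Subgroup.closure
    {u : GL (Fin (2 ^ n)) ℂ | (u : Matrix (Fin (2 ^ n)) (Fin (2 ^ n)) ℂ) ∈ PauliSet n}

/-- Z on the first qubit, identity elsewhere. -/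
def ZFirst (n : ℕ) : Matrix (Fin (2 ^ n)) (Fin (2 ^ n)) ℂ :=
  tensorPow n fun i => if i.val = 0 then PZ else 1

/-- Z on the last qubit, identity elsewhere. -/
def ZLast (n : ℕ) : Matrix (Fin (2 ^ n)) (Fin (2 ^ n)) ℂ :=
  tensorPow n fun i => if i.val = n - 1 then PZ else 1

/-- X on the last qubit, identity elsewhere. -/
def XLast (n : ℕ) : Matrix (Fin (2 ^ n)) (Fin (2 ^ n)) ℂ :=
  tensorPow n fun i => if i.val = n - 1 then PX else 1


set_option linter.unusedSectionVars false


lemma omega_eq : ω = (Real.sqrt 2 / 2 : ℝ) + (Real.sqrt 2 / 2 : ℝ) * Complex.I := by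
  have : Complex.I * (Real.pi : ℂ) / 4 = ((Real.pi / 4 : ℝ) : ℂ) * Complex.I := by
    push_cast; ring
  rw [ω, this, Complex.exp_mul_I, ← Complex.ofReal_cos, ← Complex.ofReal_sin,
    Real.cos_pi_div_four, Real.sin_pi_div_four]

lemma sqrt2_sq : ((Real.sqrt 2 : ℝ) : ℂ) ^ 2 = 2 := by
  rw [← Complex.ofReal_pow, Real.sq_sqrt (by norm_num)]
  norm_num

lemma omega_sq : ω ^ 2 = Complex.I := by
  rw [omega_eq]
  push_cast
  linear_combination ((1:ℂ)/4 + Complex.I/2 + Complex.I^2/4) * sqrt2_sq + (1/2 : ℂ) * Complex.I_sq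

lemma omega_pow_eight : ω ^ 8 = 1 := by
  have : ω ^ 8 = (ω ^ 2) ^ 4 := by ring
  rw [this, omega_sq]
  simp [pow_succ, Complex.I_mul_I]

lemma sqrt2_eq : ((Real.sqrt 2 : ℝ) : ℂ) = ω - ω ^ 3 := by
  have h2 : ω ^ 3 = Complex.I * ω := by rw [show ω^3 = ω^2 * ω by ring, omega_sq]
  rw [h2, omega_eq]; push_cast
  linear_combination ((Real.sqrt 2 : ℂ)/2) * Complex.I_sq

lemma omega_prim : IsPrimitiveRoot ω 8 := by
  have h := Complex.isPrimitiveRoot_exp 8 (by norm_num)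
  have h8 : ((8:ℕ):ℂ) = 8 := by norm_num
  rw [h8] at h
  have : Complex.exp (2 * Real.pi * Complex.I / 8) = ω := by
    rw [ω]; congr 1; ring
  rwa [this] at h

def Qomega : IntermediateField ℚ ℂ := IntermediateField.adjoin ℚ {ω}

lemma omega_mem_Qomega : ω ∈ Qomega :=
  IntermediateField.subset_adjoin ℚ {ω} rfl

lemma omega_isIntegral : IsIntegral ℚ ω :=
  (omega_prim.isIntegral (by norm_num)).tower_top

instance : FiniteDimensional ℚ Qomega :=
  IntermediateField.adjoin.finiteDimensional omega_isIntegral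

lemma finrank_Qomega : Module.finrank ℚ Qomega = 4 := by
  rw [Qomega, IntermediateField.adjoin.finrank omega_isIntegral,
    ← Polynomial.cyclotomic_eq_minpoly_rat omega_prim (by norm_num),
    Polynomial.natDegree_cyclotomic]
  decide

lemma pow_eight_of_mem {x : ℂ} (hx : x ∈ Qomega) {k : ℕ} (hk : x ^ (2 ^ k) = 1) :
    x ^ 8 = 1 := by
  set x' : Qomega := ⟨x, hx⟩ with hx'
  have hpow : x' ^ (2 ^ k) = 1 := by
    apply Subtype.ext
    push_cast [hx']
    exact hk
  have hfin : IsOfFinOrder x' := isOfFinOrder_iff_pow_eq_one.mpr ⟨2 ^ k, by positivity, hpow⟩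
  have hd : orderOf x' ∣ 2 ^ k := orderOf_dvd_of_pow_eq_one hpow
  obtain ⟨m, hm, hdm⟩ := (Nat.dvd_prime_pow Nat.prime_two).mp hd
  have hd8 : orderOf x' ∣ 8 := by
    rcases Nat.eq_zero_or_pos m with rfl | hm0
    · simp at hdm; rw [hdm]; norm_num
    · -- minimal polynomial degree argument
      have hdpos : 0 < orderOf x' := hfin.orderOf_pos
      have hprim : IsPrimitiveRoot x' (orderOf x') := IsPrimitiveRoot.orderOf x'
      have hint : IsIntegral ℚ x' := IsIntegral.of_finite ℚ x'
      have hmp : (minpoly ℚ x').natDegree ∣ Module.finrank ℚ Qomega :=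
        minpoly.degree_dvd hint
      rw [← Polynomial.cyclotomic_eq_minpoly_rat hprim hdpos,
        Polynomial.natDegree_cyclotomic, finrank_Qomega, hdm,
        Nat.totient_prime_pow Nat.prime_two hm0] at hmp
      have hmle : m ≤ 3 := by
        by_contra hcon
        push_neg at hcon
        have h8 : (2:ℕ) ^ 3 ∣ 2 ^ (m - 1) := pow_dvd_pow 2 (by omega)
        have : (2:ℕ) ^ 3 ∣ 4 := h8.trans (by simpa using hmp)
        norm_num at this
      rw [hdm]
      exact pow_dvd_pow 2 hmle |>.trans (by norm_num)
  have : x' ^ 8 = 1 := orderOf_dvd_iff_pow_eq_one.mp hd8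
  have := congrArg (Subtype.val) this
  push_cast at this
  exact this

section EntryLemmas

variable {N : Type*} [Fintype N] [DecidableEq N] (F : Subfield ℂ)

/-- Lift a matrix with entries in F to a matrix over F. -/
def liftMat (M : Matrix N N ℂ) (h : ∀ i j, M i j ∈ F) : Matrix N N F :=
  fun i j => ⟨M i j, h i j⟩

lemma liftMat_map (M : Matrix N N ℂ) (h : ∀ i j, M i j ∈ F) :
    (liftMat F M h).map F.subtype = M := by
  ext i j; rfl

lemma det_mem (M : Matrix N N ℂ) (h : ∀ i j, M i j ∈ F) : M.det ∈ F := by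
  have : M.det = F.subtype (liftMat F M h).det := by
    rw [RingHom.map_det]
    exact congrArg Matrix.det (liftMat_map F M h).symm
  rw [this]
  exact ((liftMat F M h).det).2


lemma adjugate_mem (M : Matrix N N ℂ) (h : ∀ i j, M i j ∈ F) :
    ∀ i j, M.adjugate i j ∈ F := by
  intro i j
  have : M.adjugate = ((liftMat F M h).adjugate).map F.subtype := by
    conv_lhs => rw [← liftMat_map F M h]
    exact (RingHom.map_adjugate F.subtype (liftMat F M h)).symm
  rw [this]
  exact ((liftMat F M h).adjugate i j).2

lemma inv_entry_mem (M : Matrix N N ℂ) (h : ∀ i j, M i j ∈ F) :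
    ∀ i j, M⁻¹ i j ∈ F := by
  intro i j
  rw [Matrix.inv_def, Ring.inverse_eq_inv']
  simp only [Matrix.smul_apply, smul_eq_mul]
  exact F.mul_mem (F.inv_mem (det_mem F M h)) (adjugate_mem F M h i j)

end EntryLemmas


section SpanLemmas

open Submodule

lemma kron'_entry {m k : ℕ} (A : Matrix (Fin m) (Fin m) ℂ) (B : Matrix (Fin k) (Fin k) ℂ)
    (x y : Fin (m * k)) :
    kron' A B x y = A (finProdFinEquiv.symm x).1 (finProdFinEquiv.symm y).1 *
      B (finProdFinEquiv.symm x).2 (finProdFinEquiv.symm y).2 := by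
  simp [kron', Matrix.kroneckerMap_apply]

lemma kron'_add_left {m k : ℕ} (A A' : Matrix (Fin m) (Fin m) ℂ)
    (B : Matrix (Fin k) (Fin k) ℂ) : kron' (A + A') B = kron' A B + kron' A' B := by
  ext x y; simp [kron'_entry, add_mul]

lemma kron'_add_right {m k : ℕ} (A : Matrix (Fin m) (Fin m) ℂ)
    (B B' : Matrix (Fin k) (Fin k) ℂ) : kron' A (B + B') = kron' A B + kron' A B' := by
  ext x y; simp [kron'_entry, mul_add]

lemma kron'_smul_left {m k : ℕ} (c : ℂ) (A : Matrix (Fin m) (Fin m) ℂ)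
    (B : Matrix (Fin k) (Fin k) ℂ) : kron' (c • A) B = c • kron' A B := by
  ext x y; simp [kron'_entry, mul_assoc]

lemma kron'_smul_right {m k : ℕ} (c : ℂ) (A : Matrix (Fin m) (Fin m) ℂ)
    (B : Matrix (Fin k) (Fin k) ℂ) : kron' A (c • B) = c • kron' A B := by
  ext x y; simp [kron'_entry]; ring

lemma kron'_mem_span {m k : ℕ} {s : Set (Matrix (Fin m) (Fin m) ℂ)}
    {t : Set (Matrix (Fin k) (Fin k) ℂ)} {A : Matrix (Fin m) (Fin m) ℂ}
    {B : Matrix (Fin k) (Fin k) ℂ} (hA : A ∈ span ℂ s) (hB : B ∈ span ℂ t) :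
    kron' A B ∈ span ℂ (Set.image2 kron' s t) := by
  induction hA using Submodule.span_induction with
  | mem X hX =>
    induction hB using Submodule.span_induction with
    | mem Y hY => exact subset_span (Set.mem_image2_of_mem hX hY)
    | zero => simpa using (show kron' X 0 = 0 by ext x y; simp [kron'_entry]) ▸ zero_mem _
    | add Y Z _ _ hY hZ => rw [kron'_add_right]; exact add_mem hY hZ
    | smul c Y _ hY => rw [kron'_smul_right]; exact smul_mem _ c hY
  | zero => simpa using (show kron' 0 B = 0 by ext x y; simp [kron'_entry]) ▸ zero_mem _
  | add X Y _ _ hX hY => rw [kron'_add_left]; exact add_mem hX hY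
  | smul c X _ hX => rw [kron'_smul_left]; exact smul_mem _ c hX

lemma kron'_stdBasis {m k : ℕ} (a c : Fin m) (b d : Fin k) :
    kron' (Matrix.single a c 1) (Matrix.single b d 1)
      = Matrix.single (finProdFinEquiv (a, b)) (finProdFinEquiv (c, d)) 1 := by
  ext x y
  rw [kron'_entry]
  simp only [Matrix.single, Matrix.of_apply, ← Equiv.eq_symm_apply, Prod.ext_iff,
    ite_mul, mul_ite, one_mul, mul_one, mul_zero, zero_mul]
  by_cases h1 : a = (finProdFinEquiv.symm x).1 <;>
    by_cases h2 : b = (finProdFinEquiv.symm x).2 <;>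
    by_cases h3 : c = (finProdFinEquiv.symm y).1 <;>
    by_cases h4 : d = (finProdFinEquiv.symm y).2 <;>
    simp_all [Prod.ext_iff]

lemma span_kron'_top {m k : ℕ} {s : Set (Matrix (Fin m) (Fin m) ℂ)}
    {t : Set (Matrix (Fin k) (Fin k) ℂ)} (hs : span ℂ s = ⊤) (ht : span ℂ t = ⊤) :
    span ℂ (Set.image2 kron' s t) = ⊤ := by
  rw [eq_top_iff]
  rintro M -
  have hstd : ∀ (x y : Fin (m * k)), Matrix.single x y (1:ℂ) ∈
      span ℂ (Set.image2 kron' s t) := by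
    intro x y
    have := kron'_stdBasis (finProdFinEquiv.symm x).1 (finProdFinEquiv.symm y).1
      (finProdFinEquiv.symm x).2 (finProdFinEquiv.symm y).2
    simp only [Prod.mk.eta, Equiv.apply_symm_apply] at this
    rw [← this]
    exact kron'_mem_span (by rw [hs]; trivial) (by rw [ht]; trivial)
  rw [Matrix.matrix_eq_sum_single M]
  exact sum_mem fun i _ => sum_mem fun j _ => by
    have : Matrix.single i j (M i j) = (M i j) • Matrix.single i j (1:ℂ) := by
      rw [Matrix.smul_single, smul_eq_mul, mul_one]
    rw [this]
    exact smul_mem _ _ (hstd i j)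

end SpanLemmas


section PauliSpan

open Submodule

def S2 : Set (Matrix (Fin 2) (Fin 2) ℂ) := {1, PX, PY, PZ}

lemma span_S2 : span ℂ S2 = ⊤ := by
  rw [eq_top_iff]
  rintro M -
  have h1 : (1 : Matrix (Fin 2) (Fin 2) ℂ) ∈ span ℂ S2 := subset_span (by simp [S2])
  have hX : PX ∈ span ℂ S2 := subset_span (by simp [S2])
  have hY : PY ∈ span ℂ S2 := subset_span (by simp [S2])
  have hZ : PZ ∈ span ℂ S2 := subset_span (by simp [S2])
  have hM : M = ((M 0 0 + M 1 1)/2) • (1 : Matrix (Fin 2) (Fin 2) ℂ)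
      + ((M 0 1 + M 1 0)/2) • PX
      + (Complex.I * (M 0 1 - M 1 0)/2) • PY
      + ((M 0 0 - M 1 1)/2) • PZ := by
    ext i j
    fin_cases i <;> fin_cases j <;>
      simp [PX, PY, PZ, Matrix.one_apply, Matrix.add_apply, Matrix.smul_apply] <;> ring_nf <;>
      simp [Complex.I_sq] <;> ring
  rw [hM]
  exact add_mem (add_mem (add_mem (smul_mem _ _ h1) (smul_mem _ _ hX))
    (smul_mem _ _ hY)) (smul_mem _ _ hZ)

def TP (n : ℕ) : Set (Matrix (Fin (2^n)) (Fin (2^n)) ℂ) :=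
  {M | ∃ P : Fin n → Matrix (Fin 2) (Fin 2) ℂ, (∀ i, P i ∈ S2) ∧ M = tensorPow n P}

lemma TP_succ (n : ℕ) :
    TP (n+1) = (fun M => Matrix.reindex (finCongr (pow_succ' 2 n).symm)
        (finCongr (pow_succ' 2 n).symm) M) '' (Set.image2 kron' S2 (TP n)) := by
  ext M
  constructor
  · rintro ⟨P, hP, rfl⟩
    exact ⟨kron' (P 0) (tensorPow n fun i => P i.succ),
      Set.mem_image2_of_mem (hP 0) ⟨fun i => P i.succ, fun i => hP i.succ, rfl⟩, rfl⟩
  · rintro ⟨-, ⟨A, hA, B, ⟨Q, hQ, rfl⟩, rfl⟩, rfl⟩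
    refine ⟨Fin.cases A Q, ?_, ?_⟩
    · intro i
      induction i using Fin.cases with
      | zero => simpa using hA
      | succ i => simpa using hQ i
    · symm
      show tensorPow (n+1) (Fin.cases A Q) = _
      simp only [tensorPow]
      congr 1

lemma span_TP : ∀ n, span ℂ (TP n) = ⊤ := by
  intro n
  induction n with
  | zero =>
    rw [eq_top_iff]
    rintro M -
    haveI : NeZero (2^0) := ⟨by norm_num⟩
    have h1 : (1 : Matrix (Fin (2^0)) (Fin (2^0)) ℂ) ∈ span ℂ (TP 0) :=
      subset_span ⟨fun i => i.elim0, fun i => i.elim0, rfl⟩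
    have hM : M = (M 0 0) • (1 : Matrix (Fin (2^0)) (Fin (2^0)) ℂ) := by
      ext i j
      have hi : i = 0 := by ext; omega
      have hj : j = 0 := by ext; omega
      subst hi; subst hj
      simp [Matrix.one_apply]
    rw [hM]
    exact smul_mem _ _ h1
  | succ n ih =>
    rw [TP_succ]
    have := span_kron'_top (m := 2) (k := 2^n) span_S2 ih
    let e := Matrix.reindexLinearEquiv (R := ℂ) (A := ℂ) (finCongr (pow_succ' 2 n).symm)
      (finCongr (pow_succ' 2 n).symm)
    have himg : (fun M => Matrix.reindex (finCongr (pow_succ' 2 n).symm)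
        (finCongr (pow_succ' 2 n).symm) M) '' (Set.image2 kron' S2 (TP n))
        = ⇑e '' (Set.image2 kron' S2 (TP n)) := rfl
    rw [himg, Submodule.span_image_linearEquiv, this, Submodule.map_top]
    exact LinearEquiv.range e

lemma span_PauliSet (n : ℕ) : span ℂ (PauliSet n) = ⊤ := by
  rw [eq_top_iff, ← span_TP n]
  apply span_mono
  rintro M ⟨P, hP, rfl⟩
  exact ⟨1, P, by simp, hP, (one_smul _ _).symm⟩

end PauliSpan


section CliffordInvariants

def Kf : Subfield ℂ := Qomega.toSubfield

lemma omega_mem_Kf : ω ∈ Kf := omega_mem_Qomega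

lemma I_mem_Kf : Complex.I ∈ Kf := by
  rw [← omega_sq]; exact pow_mem omega_mem_Kf 2

lemma sqrt2_mem_Kf : (Real.sqrt 2 : ℂ) ∈ Kf := by
  rw [sqrt2_eq]
  exact sub_mem omega_mem_Kf (pow_mem omega_mem_Kf 3)

lemma sqrt2_inv_mem_Kf : (Real.sqrt 2 : ℂ)⁻¹ ∈ Kf := Kf.inv_mem sqrt2_mem_Kf

lemma one_entry_mem {N : Type*} [DecidableEq N] (i j : N) :
    (1 : Matrix N N ℂ) i j ∈ Kf := by
  rw [Matrix.one_apply]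
  split
  · exact one_mem _
  · exact zero_mem _

lemma gH_entry_mem (i j : Fin 2) : gH i j ∈ Kf := by
  fin_cases i <;> fin_cases j <;> simp [gH] <;>
    first
      | exact sqrt2_mem_Kf
      | exact Kf.neg_mem sqrt2_mem_Kf
      | exact sqrt2_inv_mem_Kf
      | exact Kf.neg_mem sqrt2_inv_mem_Kf
      | exact mul_mem sqrt2_inv_mem_Kf (one_mem _)
      | exact mul_mem sqrt2_inv_mem_Kf (Kf.neg_mem (one_mem _))

lemma gS_entry_mem (i j : Fin 2) : gS i j ∈ Kf := by
  fin_cases i <;> fin_cases j <;> simp [gS] <;>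
    first
      | exact one_mem _
      | exact zero_mem _
      | exact I_mem_Kf

lemma gCZ_entry_mem (i j : Fin 4) : gCZ i j ∈ Kf := by
  fin_cases i <;> fin_cases j <;> simp [gCZ] <;>
    first
      | exact one_mem _
      | exact zero_mem _
      | exact Kf.neg_mem (one_mem _)

lemma embed_entry_mem {a c b n : ℕ} (h : a + c + b = n)
    (G : Matrix (Fin (2^c)) (Fin (2^c)) ℂ) (hG : ∀ i j, G i j ∈ Kf) :
    ∀ x y, embed a c b n h G x y ∈ Kf := by
  intro x y
  rw [embed, Matrix.reindex_apply, Matrix.submatrix_apply, kron'_entry, kron'_entry]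
  exact mul_mem (one_entry_mem _ _) (mul_mem (hG _ _) (one_entry_mem _ _))

lemma det_kron' {m k : ℕ} (A : Matrix (Fin m) (Fin m) ℂ) (B : Matrix (Fin k) (Fin k) ℂ) :
    (kron' A B).det = A.det ^ k * B.det ^ m := by
  rw [kron', Matrix.det_reindex_self, Matrix.det_kronecker, Fintype.card_fin, Fintype.card_fin]

lemma det_embed_pow8 {a c b n : ℕ} (h : a + c + b = n)
    (G : Matrix (Fin (2^c)) (Fin (2^c)) ℂ) (hG : G.det ^ 8 = 1) :
    ((embed a c b n h G).det) ^ 8 = 1 := by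
  rw [embed, Matrix.det_reindex_self, det_kron', det_kron', Matrix.det_one, Matrix.det_one]
  have : ∀ x : ℂ, ((1:ℂ) ^ (2^c * 2^b) * ((x ^ (2^b) * 1 ^ (2^c)) ^ (2^a))) ^ 8
      = (x ^ 8) ^ (2^b * 2^a) := by
    intro x
    rw [one_pow, one_pow, mul_one, one_mul, ← pow_mul, ← pow_mul, ← pow_mul]
    ring_nf
  rw [this, hG, one_pow]

lemma I_pow8 : Complex.I ^ 8 = 1 := by
  rw [show (8:ℕ) = 2 * 4 from rfl, pow_mul, Complex.I_sq]
  norm_num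

lemma det_gH_pow8 : gH.det ^ 8 = 1 := by
  have h2 : ((Real.sqrt 2 : ℂ))⁻¹ ^ 2 = 2⁻¹ := by rw [inv_pow, sqrt2_sq]
  rw [gH, Matrix.det_smul, Fintype.card_fin, h2, Matrix.det_fin_two_of]
  norm_num

lemma det_gS_pow8 : gS.det ^ 8 = 1 := by
  rw [gS, Matrix.det_fin_two_of]
  simpa using I_pow8

lemma det_gCZ_pow8 : gCZ.det ^ 8 = 1 := by
  have : gCZ.det = -1 := by
    simp [gCZ, Matrix.det_succ_row_zero, Fin.sum_univ_succ]
  rw [this]; norm_num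

lemma clifford_invariant (n : ℕ) (u : GL (Fin (2^n)) ℂ) (hu : u ∈ CliffordGroup n) :
    (∀ i j, (u : Matrix (Fin (2^n)) (Fin (2^n)) ℂ) i j ∈ Kf) ∧
      ((u : Matrix (Fin (2^n)) (Fin (2^n)) ℂ).det) ^ 8 = 1 := by
  induction hu using Subgroup.closure_induction with
  | mem x hx =>
    rcases hx with (hx | hx) | hx
    · -- ω • 1
      rw [Set.mem_singleton_iff] at hx
      rw [hx]
      constructor
      · intro i j
        rw [Matrix.smul_apply, smul_eq_mul]
        exact mul_mem omega_mem_Kf (one_entry_mem _ _)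
      · rw [Matrix.det_smul, Fintype.card_fin, Matrix.det_one, mul_one, ← pow_mul,
          mul_comm, pow_mul, omega_pow_eight, one_pow]
    · obtain ⟨a, b, h, hx | hx⟩ := hx <;> rw [hx]
      · exact ⟨embed_entry_mem h gH gH_entry_mem, det_embed_pow8 h gH det_gH_pow8⟩
      · exact ⟨embed_entry_mem h gS gS_entry_mem, det_embed_pow8 h gS det_gS_pow8⟩
    · obtain ⟨a, b, h, hx⟩ := hx
      rw [hx]
      exact ⟨embed_entry_mem h gCZ gCZ_entry_mem, det_embed_pow8 h gCZ det_gCZ_pow8⟩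
  | one =>
    rw [Units.val_one]
    exact ⟨one_entry_mem, by rw [Matrix.det_one, one_pow]⟩
  | mul x y hx hy ihx ihy =>
    rw [Units.val_mul]
    constructor
    · intro i j
      rw [Matrix.mul_apply]
      exact sum_mem fun k _ => mul_mem (ihx.1 i k) (ihy.1 k j)
    · rw [Matrix.det_mul, mul_pow, ihx.2, ihy.2, mul_one]
  | inv x hx ih =>
    have hco : ((x⁻¹ : GL (Fin (2^n)) ℂ) : Matrix (Fin (2^n)) (Fin (2^n)) ℂ)
        = ((x : Matrix (Fin (2^n)) (Fin (2^n)) ℂ))⁻¹ := Matrix.coe_units_inv x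
    constructor
    · intro i j
      rw [hco]
      exact inv_entry_mem Kf _ ih.1 i j
    · have h1 : (x : Matrix (Fin (2^n)) (Fin (2^n)) ℂ)
          * ((x⁻¹ : GL (Fin (2^n)) ℂ) : Matrix (Fin (2^n)) (Fin (2^n)) ℂ) = 1 := by
        rw [← Units.val_mul, mul_inv_cancel, Units.val_one]
      have hdet : (x : Matrix (Fin (2^n)) (Fin (2^n)) ℂ).det
          * ((x⁻¹ : GL (Fin (2^n)) ℂ) : Matrix (Fin (2^n)) (Fin (2^n)) ℂ).det = 1 := by
        rw [← Matrix.det_mul, h1, Matrix.det_one]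
      calc ((x⁻¹ : GL (Fin (2^n)) ℂ) : Matrix (Fin (2^n)) (Fin (2^n)) ℂ).det ^ 8
          = (x : Matrix (Fin (2^n)) (Fin (2^n)) ℂ).det ^ 8
            * ((x⁻¹ : GL (Fin (2^n)) ℂ) : Matrix (Fin (2^n)) (Fin (2^n)) ℂ).det ^ 8 := by
            rw [ih.2, one_mul]
        _ = 1 := by rw [← mul_pow, hdet, one_pow]

end CliffordInvariants

section Commutant

lemma commute_all {n : ℕ} (E : Matrix (Fin (2^n)) (Fin (2^n)) ℂ)
    (h : ∀ P ∈ PauliSet n, E * P = P * E) :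
    ∀ B : Matrix (Fin (2^n)) (Fin (2^n)) ℂ, E * B = B * E := by
  let S : Submodule ℂ (Matrix (Fin (2^n)) (Fin (2^n)) ℂ) :=
    { carrier := {B | E * B = B * E}
      add_mem' := fun {a b} ha hb => by
        simp only [Set.mem_setOf_eq] at *
        rw [mul_add, add_mul, ha, hb]
      zero_mem' := by simp
      smul_mem' := fun c a ha => by
        simp only [Set.mem_setOf_eq] at *
        rw [mul_smul_comm, smul_mul_assoc, ha] }
  have hle : Submodule.span ℂ (PauliSet n) ≤ S := Submodule.span_le.mpr h
  intro B
  exact hle (by rw [span_PauliSet]; trivial)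

lemma eq_smul_one_of_commute {n : ℕ} (E : Matrix (Fin (2^n)) (Fin (2^n)) ℂ)
    (h : ∀ B : Matrix (Fin (2^n)) (Fin (2^n)) ℂ, E * B = B * E) :
    ∃ c : ℂ, E = c • 1 := by
  obtain ⟨c, hc⟩ := Matrix.mem_range_scalar_of_commute_single
    (M := E) (fun i j _ => (h _).symm)
  refine ⟨c, ?_⟩
  rw [← hc]
  ext i j
  simp [Matrix.scalar_apply, Matrix.diagonal_apply, Matrix.one_apply]

end Commutant


/-- Two Clifford operators acting identically on the Pauli group by
conjugation differ only by a global phase ωⁱ, 0 ≤ i < 8. -/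
theorem clifford_same_action_phase (n : ℕ) (C D : GL (Fin (2 ^ n)) ℂ)
    (hC : C ∈ CliffordGroup n) (hD : D ∈ CliffordGroup n)
    (hact : ∀ P ∈ PauliSet n,
      (C : Matrix (Fin (2 ^ n)) (Fin (2 ^ n)) ℂ) * P *
        ((C⁻¹ : GL (Fin (2 ^ n)) ℂ) : Matrix (Fin (2 ^ n)) (Fin (2 ^ n)) ℂ)
      = (D : Matrix (Fin (2 ^ n)) (Fin (2 ^ n)) ℂ) * P *
        ((D⁻¹ : GL (Fin (2 ^ n)) ℂ) : Matrix (Fin (2 ^ n)) (Fin (2 ^ n)) ℂ)) :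
    ∃ i : ℕ, i < 8 ∧
      (C : Matrix (Fin (2 ^ n)) (Fin (2 ^ n)) ℂ)
        = ω ^ i • (D : Matrix (Fin (2 ^ n)) (Fin (2 ^ n)) ℂ) := by
  haveI : NeZero (2 ^ n) := ⟨pow_ne_zero n two_ne_zero⟩
  set M := Matrix (Fin (2 ^ n)) (Fin (2 ^ n)) ℂ
  set E : GL (Fin (2 ^ n)) ℂ := D⁻¹ * C with hEdef
  have hE : E ∈ CliffordGroup n := mul_mem (inv_mem hD) hC
  have hc : ((C⁻¹ : GL (Fin (2 ^ n)) ℂ) : M) * (C : M) = 1 := by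
    rw [← Units.val_mul, inv_mul_cancel, Units.val_one]
  have hd' : ((D⁻¹ : GL (Fin (2 ^ n)) ℂ) : M) * (D : M) = 1 := by
    rw [← Units.val_mul, inv_mul_cancel, Units.val_one]
  have hEcomm : ∀ P ∈ PauliSet n, (E : M) * P = P * (E : M) := by
    intro P hP
    have h2 := congrArg
      (fun X : M => ((D⁻¹ : GL (Fin (2 ^ n)) ℂ) : M) * X * (C : M)) (hact P hP)
    simp only [mul_assoc] at h2
    rw [hc, mul_one] at h2
    have hEval : (E : M) = ((D⁻¹ : GL (Fin (2 ^ n)) ℂ) : M) * (C : M) := Units.val_mul _ _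
    rw [hEval]
    simp only [mul_assoc]
    rw [h2, ← mul_assoc, ← mul_assoc, hd', one_mul]
  obtain ⟨lam, hlam⟩ := eq_smul_one_of_commute (E : M) (commute_all (E : M) hEcomm)
  have hinv := clifford_invariant n E hE
  have hlam_mem : lam ∈ Qomega := by
    have h00 := hinv.1 0 0
    rw [hlam] at h00
    have h := (by simpa [Matrix.smul_apply, Matrix.one_apply] using h00 : lam ∈ Kf)
    exact h
  have hdetE : (E : M).det = lam ^ (2 ^ n) := by
    rw [hlam, Matrix.det_smul, Fintype.card_fin, Matrix.det_one, mul_one]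
  have hlam_pow : lam ^ (2 ^ (n + 3)) = 1 := by
    have := hinv.2
    rw [hdetE, ← pow_mul] at this
    have hcalc : 2 ^ n * 8 = 2 ^ (n + 3) := by rw [pow_add]; norm_num
    rwa [hcalc] at this
  have hlam8 : lam ^ 8 = 1 := pow_eight_of_mem hlam_mem hlam_pow
  obtain ⟨i, hi, hωi⟩ := omega_prim.eq_pow_of_pow_eq_one hlam8
  refine ⟨i, hi, ?_⟩
  have hCE : (C : M) = (D : M) * (E : M) := by
    rw [← Units.val_mul, hEdef, mul_inv_cancel_left]
  rw [hCE, hlam, hωi, Matrix.mul_smul, mul_one]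
end
end

section
/- For every n ≥ 0, the scalar matrices contained in the Clifford group Clifford(n) are exactly the eight matrices ωᵏ·I for k = 0, 1, …, 7, where ω = e^{iπ/4}; that is, λ·I ∈ Clifford(n) if and only if λ = ωᵏ for some 0 ≤ k < 8. -/
open scoped Matrix Kronecker

noncomputable section

namespace CliffordAux

open Matrix Complex

/-- Gaussian integers inside ℂ as a subring. -/
def Gau : Subring ℂ := GaussianInt.toComplex.range

lemma I_mem_Gau : Complex.I ∈ Gau :=
  ⟨⟨0, 1⟩, by simp [GaussianInt.toComplex_def']⟩

lemma mem_Gau_iff {z : ℂ} : z ∈ Gau ↔ ∃ p q : ℤ, z = (p:ℂ) + (q:ℂ) * Complex.I := by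
  constructor
  · rintro ⟨g, rfl⟩
    exact ⟨g.re, g.im, by rw [GaussianInt.toComplex_def]⟩
  · rintro ⟨p, q, rfl⟩
    exact ⟨⟨p, q⟩, by rw [GaussianInt.toComplex_def']⟩

lemma star_mem_Gau {z : ℂ} (hz : z ∈ Gau) : star z ∈ Gau := by
  rw [mem_Gau_iff] at hz ⊢
  obtain ⟨p, q, rfl⟩ := hz
  refine ⟨p, -q, ?_⟩
  push_cast
  rw [star_add, star_mul', Complex.star_def, Complex.conj_I]
  rw [map_intCast, map_intCast]
  ring

lemma unit_mul {N : ℕ} {M M' : Matrix (Fin N) (Fin N) ℂ}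
    (hu : Mᴴ * M = 1) (hu' : M'ᴴ * M' = 1) : (M * M')ᴴ * (M * M') = 1 := by
  rw [Matrix.conjTranspose_mul, mul_assoc, ← mul_assoc Mᴴ, hu, one_mul, hu']

lemma one_entries {N : ℕ} : ∀ i j, (1 : Matrix (Fin N) (Fin N) ℂ) i j ∈ Gau := by
  intro i j
  rw [Matrix.one_apply]
  split <;> simp [Subring.one_mem, Subring.zero_mem]

/-- The invariant: unitary, and a dyadic-Gaussian rescaling. -/
def Nice {N : ℕ} (M : Matrix (Fin N) (Fin N) ℂ) : Prop :=
  Mᴴ * M = 1 ∧ ∃ (k : ℕ) (A : Matrix (Fin N) (Fin N) ℂ),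
    (∀ i j, A i j ∈ Gau) ∧ M = ((Real.sqrt 2 : ℂ) ^ k)⁻¹ • A

lemma Nice_one {N : ℕ} : Nice (1 : Matrix (Fin N) (Fin N) ℂ) := by
  refine ⟨by simp, 0, 1, one_entries, by simp⟩

lemma Nice_mul {N : ℕ} {M M' : Matrix (Fin N) (Fin N) ℂ}
    (h : Nice M) (h' : Nice M') : Nice (M * M') := by
  obtain ⟨hu, k, A, hA, rfl⟩ := h
  obtain ⟨hu', k', A', hA', rfl⟩ := h'
  refine ⟨unit_mul hu hu', k + k', A * A', ?_, ?_⟩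
  · intro i j
    rw [Matrix.mul_apply]
    exact Subring.sum_mem _ fun c _ => Subring.mul_mem _ (hA i c) (hA' c j)
  · rw [Matrix.smul_mul, Matrix.mul_smul, smul_smul, pow_add, mul_inv]

lemma Nice_conjTranspose {N : ℕ} {M : Matrix (Fin N) (Fin N) ℂ}
    (h : Nice M) : Nice Mᴴ := by
  obtain ⟨hu, k, A, hA, rfl⟩ := h
  refine ⟨?_, k, Aᴴ, fun i j => star_mem_Gau (hA j i), ?_⟩
  · rw [Matrix.conjTranspose_conjTranspose]
    exact mul_eq_one_comm.mp hu
  · rw [Matrix.conjTranspose_smul]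
    congr 1
    rw [star_inv₀, star_pow, Complex.star_def, Complex.conj_ofReal]

lemma reindex_mul' {α : Type*} [Fintype α] [DecidableEq α] {n : ℕ} (e : α ≃ Fin n)
    (A B : Matrix α α ℂ) :
    Matrix.reindex e e A * Matrix.reindex e e B = Matrix.reindex e e (A * B) := by
  simp only [Matrix.reindex_apply]
  exact Matrix.submatrix_mul_equiv A B _ e.symm _

lemma kron'_mul {m k : ℕ} (A C : Matrix (Fin m) (Fin m) ℂ)
    (B D : Matrix (Fin k) (Fin k) ℂ) :
    kron' A B * kron' C D = kron' (A * C) (B * D) := by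
  rw [kron', kron', kron', reindex_mul', Matrix.mul_kronecker_mul]

lemma kron'_one {m k : ℕ} :
    kron' (1 : Matrix (Fin m) (Fin m) ℂ) (1 : Matrix (Fin k) (Fin k) ℂ) = 1 := by
  rw [kron', Matrix.one_kronecker_one, Matrix.reindex_apply, Matrix.submatrix_one_equiv]

lemma kron'_conjTranspose {m k : ℕ} (A : Matrix (Fin m) (Fin m) ℂ)
    (B : Matrix (Fin k) (Fin k) ℂ) : (kron' A B)ᴴ = kron' Aᴴ Bᴴ := by
  rw [kron', kron', Matrix.reindex_apply, Matrix.reindex_apply,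
    Matrix.conjTranspose_submatrix]
  ext ⟨i1, i2⟩ ⟨j1, j2⟩
  simp [Matrix.conjTranspose_apply, mul_comm]

lemma kron'_smul {m k : ℕ} (x : ℂ) (A : Matrix (Fin m) (Fin m) ℂ)
    (B : Matrix (Fin k) (Fin k) ℂ) : kron' (x • A) B = x • kron' A B := by
  rw [kron', kron', Matrix.smul_kronecker, Matrix.reindex_apply, Matrix.reindex_apply,
    Matrix.submatrix_smul]
  rfl

lemma kron'_smul' {m k : ℕ} (x : ℂ) (A : Matrix (Fin m) (Fin m) ℂ)
    (B : Matrix (Fin k) (Fin k) ℂ) : kron' A (x • B) = x • kron' A B := by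
  rw [kron', kron', Matrix.kronecker_smul, Matrix.reindex_apply, Matrix.reindex_apply,
    Matrix.submatrix_smul]
  rfl

lemma kron'_entries {m k : ℕ} {A : Matrix (Fin m) (Fin m) ℂ} {B : Matrix (Fin k) (Fin k) ℂ}
    (hA : ∀ i j, A i j ∈ Gau) (hB : ∀ i j, B i j ∈ Gau) :
    ∀ i j, kron' A B i j ∈ Gau := by
  intro i j
  rw [kron', Matrix.reindex_apply, Matrix.submatrix_apply]
  exact Subring.mul_mem _ (hA _ _) (hB _ _)

lemma embed_mul {a c b n : ℕ} (h : a + c + b = n) (G G' : Matrix (Fin (2^c)) (Fin (2^c)) ℂ) :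
    embed a c b n h G * embed a c b n h G' = embed a c b n h (G * G') := by
  rw [embed, embed, embed, reindex_mul', kron'_mul, kron'_mul, one_mul, one_mul]

lemma embed_one {a c b n : ℕ} (h : a + c + b = n) :
    embed a c b n h (1 : Matrix (Fin (2^c)) (Fin (2^c)) ℂ) = 1 := by
  rw [embed, kron'_one, kron'_one, Matrix.reindex_apply, Matrix.submatrix_one_equiv]

lemma embed_conjTranspose {a c b n : ℕ} (h : a + c + b = n)
    (G : Matrix (Fin (2^c)) (Fin (2^c)) ℂ) :
    (embed a c b n h G)ᴴ = embed a c b n h Gᴴ := by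
  rw [embed, embed, Matrix.reindex_apply, Matrix.reindex_apply,
    Matrix.conjTranspose_submatrix, kron'_conjTranspose, kron'_conjTranspose,
    Matrix.conjTranspose_one, Matrix.conjTranspose_one]

lemma embed_smul {a c b n : ℕ} (h : a + c + b = n) (x : ℂ)
    (G : Matrix (Fin (2^c)) (Fin (2^c)) ℂ) :
    embed a c b n h (x • G) = x • embed a c b n h G := by
  rw [embed, embed, kron'_smul, kron'_smul', Matrix.reindex_apply, Matrix.reindex_apply,
    Matrix.submatrix_smul]
  rfl

lemma embed_entries {a c b n : ℕ} (h : a + c + b = n)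
    {G : Matrix (Fin (2^c)) (Fin (2^c)) ℂ} (hG : ∀ i j, G i j ∈ Gau) :
    ∀ i j, embed a c b n h G i j ∈ Gau := by
  intro i j
  rw [embed, Matrix.reindex_apply, Matrix.submatrix_apply]
  exact kron'_entries one_entries (kron'_entries hG one_entries) _ _

lemma Nice_embed {a c b n : ℕ} (h : a + c + b = n)
    {G : Matrix (Fin (2^c)) (Fin (2^c)) ℂ} (hG : Nice G) :
    Nice (embed a c b n h G) := by
  obtain ⟨hu, k, A, hA, hGA⟩ := hG
  refine ⟨?_, k, embed a c b n h A, embed_entries h hA, ?_⟩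
  · rw [embed_conjTranspose, embed_mul, hu, embed_one]
  · rw [hGA, embed_smul]

lemma hs2 : (Real.sqrt 2 : ℂ) * (Real.sqrt 2 : ℂ) = 2 := by
  rw [← Complex.ofReal_mul, Real.mul_self_sqrt (by norm_num)]; norm_num

lemma hsne : (Real.sqrt 2 : ℂ) ≠ 0 := by
  simp [Real.sqrt_eq_zero']

lemma hω : ω = (Real.sqrt 2 : ℂ)⁻¹ * (1 + Complex.I) := by
  have h : Complex.I * (Real.pi : ℂ) / 4 = ((Real.pi / 4 : ℝ) : ℂ) * Complex.I := by
    push_cast; ring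
  rw [ω, h, Complex.exp_mul_I, ← Complex.ofReal_cos, ← Complex.ofReal_sin,
    Real.cos_pi_div_four, Real.sin_pi_div_four]
  push_cast
  field_simp
  linear_combination (1 + Complex.I) * hs2

lemma hω2 : ω ^ 2 = Complex.I := by
  have hpow : (Real.sqrt 2 : ℂ) ^ 2 = 2 := by rw [sq]; exact hs2
  rw [hω, mul_pow, inv_pow, hpow]
  linear_combination (2:ℂ)⁻¹ * Complex.I_sq

lemma hω4 : ω ^ 4 = -1 := by
  rw [show (4:ℕ) = 2*2 from rfl, pow_mul, hω2, sq, Complex.I_mul_I]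

lemma hω6 : ω ^ 6 = -Complex.I := by
  rw [show (6:ℕ) = 4+2 from rfl, pow_add, hω4, hω2]; ring

lemma hω8 : ω ^ 8 = 1 := by
  rw [show (8:ℕ) = 4+4 from rfl, pow_add, hω4]; ring

lemma h1I : (1 : ℂ) + Complex.I = ω * (Real.sqrt 2 : ℂ) := by
  rw [hω]; field_simp [hsne]

lemma hωstar : star ω * ω = 1 := by
  have habs : ‖ω‖ = 1 := by
    rw [ω, Complex.norm_exp]
    norm_num [Complex.div_re]
  calc star ω * ω = ω * (starRingEnd ℂ) ω := by rw [mul_comm]; rfl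
  _ = ↑(Complex.normSq ω) := Complex.mul_conj ω
  _ = 1 := by rw [← Complex.sq_norm ω, habs]; norm_num

lemma key : ∀ (k : ℕ) (p q : ℤ), p^2 + q^2 = 2^k →
    ∃ m : ℕ, (p:ℂ) + (q:ℂ) * Complex.I = ω ^ m * (Real.sqrt 2 : ℂ) ^ k := by
  intro k
  induction k with
  | zero =>
    intro p q h
    simp only [pow_zero] at h
    have hp2 : p^2 ≤ 1 := by nlinarith [sq_nonneg q]
    have hq2 : q^2 ≤ 1 := by nlinarith [sq_nonneg p]
    have hp := abs_le_of_sq_le_sq' (by rw [one_pow]; exact hp2 : p^2 ≤ (1:ℤ)^2) one_pos.le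
    have hq := abs_le_of_sq_le_sq' (by rw [one_pow]; exact hq2 : q^2 ≤ (1:ℤ)^2) one_pos.le
    obtain ⟨hp1, hp2'⟩ := hp; obtain ⟨hq1, hq2'⟩ := hq
    interval_cases p <;> interval_cases q <;> simp_all <;>
      first
      | (refine ⟨0, ?_⟩; rw [pow_zero]; done)
      | (refine ⟨2, ?_⟩; rw [hω2]; done)
      | (refine ⟨4, ?_⟩; rw [hω4]; done)
      | (refine ⟨6, ?_⟩; rw [hω6]; done)
  | succ k ih =>
    intro p q h
    have heven : Even (p + q) := by
      have hsum : Even (p^2 + q^2) := by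
        rw [h, pow_succ]; exact ⟨2^k, by ring⟩
      have hpq : Even p ↔ Even q := by
        have := Int.even_add.mp hsum
        simpa [Int.even_pow] using this
      exact Int.even_add.mpr hpq
    obtain ⟨t, ht⟩ := heven
    have hq : q = t + (t - p) := by omega
    have h' : t^2 + (t-p)^2 = 2^k := by
      have h2' : 2*(t^2+(t-p)^2) = 2*2^k := by linear_combination h - (2*t-p+q)*ht
      exact mul_left_cancel₀ two_ne_zero h2'
    obtain ⟨m, hm⟩ := ih t (t - p) h'
    refine ⟨m + 1, ?_⟩
    have hdecomp : (p:ℂ) + (q:ℂ) * Complex.I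
        = (1 + Complex.I) * ((t:ℂ) + ((t:ℂ) - (p:ℂ)) * Complex.I) := by
      rw [hq]; push_cast
      linear_combination ((p:ℂ) - (t:ℂ)) * Complex.I_sq
    rw [hdecomp]
    push_cast at hm
    rw [hm, h1I, pow_succ, pow_succ]
    ring

lemma Nice_scalar {N : ℕ} : Nice (ω • (1 : Matrix (Fin N) (Fin N) ℂ)) := by
  refine ⟨?_, 1, (1 + Complex.I) • 1, ?_, ?_⟩
  · rw [Matrix.conjTranspose_smul, Matrix.conjTranspose_one, Matrix.smul_mul,
      Matrix.mul_smul, smul_smul, hωstar, one_smul, one_mul]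
  · intro i j
    rw [Matrix.smul_apply, smul_eq_mul]
    exact Subring.mul_mem _ (Subring.add_mem _ (Subring.one_mem _) I_mem_Gau) (one_entries i j)
  · rw [smul_smul, pow_one, ← hω]

lemma Nice_gS : Nice gS := by
  refine ⟨?_, 0, gS, ?_, by simp⟩
  · ext i j
    fin_cases i <;> fin_cases j <;>
      simp [gS, Matrix.mul_apply, Fin.sum_univ_two, Matrix.conjTranspose_apply,
        Matrix.one_apply, Complex.star_def, Complex.conj_I, Complex.I_mul_I]
  · intro i j
    fin_cases i <;> fin_cases j <;> simp only [gS] <;>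
      first
        | exact Subring.one_mem _
        | exact Subring.zero_mem _
        | exact I_mem_Gau
        | (simp; first | exact Subring.one_mem _ | exact Subring.zero_mem _ | exact I_mem_Gau)

lemma Nice_gCZ : Nice gCZ := by
  refine ⟨?_, 0, gCZ, ?_, by simp⟩
  · ext i j
    fin_cases i <;> fin_cases j <;>
      simp [gCZ, Matrix.mul_apply, Fin.sum_univ_four, Matrix.conjTranspose_apply,
        Matrix.one_apply, Matrix.vecHead, Matrix.vecTail]
  · intro i j
    fin_cases i <;> fin_cases j <;> simp only [gCZ] <;>
      first
        | exact Subring.one_mem _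
        | exact Subring.zero_mem _
        | exact Subring.neg_mem _ (Subring.one_mem _)
        | (simp; first | exact Subring.one_mem _ | exact Subring.zero_mem _ | exact Subring.neg_mem _ (Subring.one_mem _))

lemma Nice_gH : Nice gH := by
  refine ⟨?_, 1, !![1,1;1,-1], ?_, by rw [pow_one]; rfl⟩
  · ext i j
    fin_cases i <;> fin_cases j <;>
      simp [gH, Matrix.mul_apply, Fin.sum_univ_two, Matrix.conjTranspose_apply,
        Matrix.one_apply, Complex.star_def, Complex.conj_ofReal, map_inv₀] <;>
      field_simp <;> linear_combination -hs2
  · intro i j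
    fin_cases i <;> fin_cases j <;> simp only [] <;>
      first
        | exact Subring.one_mem _
        | exact Subring.zero_mem _
        | exact Subring.neg_mem _ (Subring.one_mem _)
        | (simp; first | exact Subring.one_mem _ | exact Subring.zero_mem _ | exact Subring.neg_mem _ (Subring.one_mem _))

end CliffordAux

open CliffordAux in
/-- The scalar matrices in the Clifford group are exactly the eight
matrices ωᵏ·I, 0 ≤ k < 8, where ω = e^{iπ/4}. -/
theorem clifford_scalars (n : ℕ) (lam : ℂ) :
    (∃ u : GL (Fin (2 ^ n)) ℂ, u ∈ CliffordGroup n ∧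
      (u : Matrix (Fin (2 ^ n)) (Fin (2 ^ n)) ℂ)
        = lam • (1 : Matrix (Fin (2 ^ n)) (Fin (2 ^ n)) ℂ))
    ↔ ∃ k : ℕ, k < 8 ∧ lam = ω ^ k := by
  constructor
  · rintro ⟨u, hu, huval⟩
    have i0 : Fin (2 ^ n) := ⟨0, by positivity⟩
    have hNice : Nice ((u : Matrix (Fin (2 ^ n)) (Fin (2 ^ n)) ℂ)) := by
      have hu' : u ∈ Subgroup.closure
          {v : GL (Fin (2 ^ n)) ℂ | (v : Matrix (Fin (2 ^ n)) (Fin (2 ^ n)) ℂ) ∈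
            CliffordGenSet n} := hu
      clear huval hu
      induction hu' using Subgroup.closure_induction with
      | mem x hx =>
        rcases hx with (hx | ⟨a, b, hab, hx | hx⟩) | ⟨a, b, hab, hx⟩
        · rw [hx]; exact Nice_scalar
        · rw [hx]; exact Nice_embed hab Nice_gH
        · rw [hx]; exact Nice_embed hab Nice_gS
        · rw [hx]; exact Nice_embed hab Nice_gCZ
      | one => rw [Units.val_one]; exact Nice_one
      | mul x y hx hy ihx ihy => rw [Units.val_mul]; exact Nice_mul ihx ihy
      | inv x hx ih =>
        have h1 : x.val * (x⁻¹).val = 1 := by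
          rw [← Units.val_mul, mul_inv_cancel, Units.val_one]
        have h2 : (x⁻¹).val = (x.val)ᴴ := by
          calc (x⁻¹).val = 1 * (x⁻¹).val := (one_mul _).symm
          _ = ((x.val)ᴴ * x.val) * (x⁻¹).val := by rw [ih.1]
          _ = (x.val)ᴴ * (x.val * (x⁻¹).val) := by rw [mul_assoc]
          _ = (x.val)ᴴ := by rw [h1, mul_one]
        show Nice (x⁻¹).val
        rw [h2]
        exact Nice_conjTranspose ih
    obtain ⟨hunit, k, A, hA, heq⟩ := hNice
    rw [huval] at hunit heq
    have hstar : star lam * lam = 1 := by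
      rw [Matrix.conjTranspose_smul, Matrix.conjTranspose_one, Matrix.smul_mul,
        Matrix.mul_smul, smul_smul, one_mul] at hunit
      have h := congrFun (congrFun hunit i0) i0
      simpa [Matrix.smul_apply, Matrix.one_apply_eq, smul_eq_mul] using h
    have hentry : lam = ((Real.sqrt 2 : ℂ) ^ k)⁻¹ * A i0 i0 := by
      have h := congrFun (congrFun heq i0) i0
      simpa [Matrix.smul_apply, Matrix.one_apply_eq, smul_eq_mul] using h
    obtain ⟨p, q, hpq⟩ := mem_Gau_iff.mp (hA i0 i0)
    have hsk : ((Real.sqrt 2 : ℂ) ^ k) ≠ 0 := pow_ne_zero _ hsne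
    have hlam : (p:ℂ) + (q:ℂ) * Complex.I = (Real.sqrt 2 : ℂ) ^ k * lam := by
      rw [hentry, ← hpq]; field_simp
    have hstar_eq : star ((p:ℂ) + (q:ℂ) * Complex.I) = (p:ℂ) - (q:ℂ) * Complex.I := by
      rw [star_add, star_mul', Complex.star_def, Complex.conj_I, map_intCast, map_intCast]
      ring
    have hsq : ((p:ℂ) + (q:ℂ) * Complex.I) * star ((p:ℂ) + (q:ℂ) * Complex.I)
        = 2 ^ k := by
      rw [hlam, star_mul']
      have hs : star ((Real.sqrt 2 : ℂ) ^ k) = (Real.sqrt 2 : ℂ) ^ k := by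
        rw [star_pow, Complex.star_def, Complex.conj_ofReal]
      rw [hs]
      calc ((Real.sqrt 2:ℂ) ^ k * lam) * ((Real.sqrt 2:ℂ) ^ k * star lam)
          = ((Real.sqrt 2:ℂ) * (Real.sqrt 2:ℂ)) ^ k * (star lam * lam) := by ring
      _ = 2 ^ k := by rw [hs2, hstar, mul_one]
    have hZ : (p ^ 2 + q ^ 2 : ℤ) = 2 ^ k := by
      have hc : ((p ^ 2 + q ^ 2 : ℤ) : ℂ) = ((2 ^ k : ℤ) : ℂ) := by
        push_cast
        rw [hstar_eq] at hsq
        linear_combination hsq + (q:ℂ) ^ 2 * Complex.I_sq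
      exact_mod_cast hc
    obtain ⟨m, hm⟩ := key k p q hZ
    have hlam' : lam = ω ^ m := by
      refine mul_left_cancel₀ hsk ?_
      rw [← hlam, hm]; ring
    refine ⟨m % 8, Nat.mod_lt _ (by norm_num), ?_⟩
    conv_lhs => rw [hlam', ← Nat.div_add_mod m 8]
    rw [pow_add, pow_mul, hω8, one_pow, one_mul]
  · rintro ⟨k, hk, rfl⟩
    have hmul : ω * ω ^ 7 = 1 := by rw [← pow_succ']; exact hω8
    have hmul' : ω ^ 7 * ω = 1 := by rw [← pow_succ]; exact hω8
    have hinv1 : (ω • (1 : Matrix (Fin (2 ^ n)) (Fin (2 ^ n)) ℂ)) * (ω ^ 7 • 1) = 1 := by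
      rw [Matrix.smul_mul, Matrix.mul_smul, one_mul, smul_smul, hmul, one_smul]
    have hinv2 : (ω ^ 7 • (1 : Matrix (Fin (2 ^ n)) (Fin (2 ^ n)) ℂ)) * (ω • 1) = 1 := by
      rw [Matrix.smul_mul, Matrix.mul_smul, one_mul, smul_smul, hmul', one_smul]
    let u0 : GL (Fin (2 ^ n)) ℂ := ⟨ω • 1, ω ^ 7 • 1, hinv1, hinv2⟩
    have hu0 : u0 ∈ CliffordGroup n :=
      Subgroup.subset_closure (Set.mem_union_left _ (Set.mem_union_left _ rfl))
    refine ⟨u0 ^ k, pow_mem hu0 k, ?_⟩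
    rw [Units.val_pow_eq_pow_val]
    show (ω • (1 : Matrix (Fin (2 ^ n)) (Fin (2 ^ n)) ℂ)) ^ k = ω ^ k • 1
    rw [smul_pow, one_pow]
end
end
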